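/- Let H and K be subgroups of a finite abelian group G with H ∩ K = {0}. Let D and E be multisets contained in H and K respectively. Then #Σ(D ∪ E) = #ΣD · #ΣE. -/

import Mathlib

/-- The sumset ΣA of a multiset A: all sums of submultisets of A (including the empty sum 0). -/
def sumset {G : Type*} [AddCommMonoid G] (A : Multiset G) : Set G :=
  {x | ∃ B ≤ A, B.sum = x}

lemma split_le {G : Type*} [DecidableEq G] (D E B : Multiset G) (h : B ≤ D + E) :
    ∃ B₁ B₂, B₁ ≤ D ∧ B₂ ≤ E ∧ B = B₁ + B₂ := by
  refine ⟨B ∩ D, B - B ∩ D, Multiset.inter_le_right, ?_, ?_⟩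
  · rw [Multiset.le_iff_count]
    intro a
    have h1 := Multiset.count_le_of_le a h
    rw [Multiset.count_add] at h1
    rw [Multiset.count_sub, Multiset.count_inter]
    omega
  · rw [add_tsub_cancel_of_le Multiset.inter_le_left]

theorem stmt_5 {G : Type*} [AddCommGroup G] [Fintype G]
    (H K : AddSubgroup G) (hinf : H ⊓ K = ⊥)
    (D E : Multiset G) (hD : ∀ x ∈ D, x ∈ H) (hE : ∀ x ∈ E, x ∈ K) :
    (sumset (D + E)).ncard = (sumset D).ncard * (sumset E).ncard := by
  classical
  have hDH : ∀ x ∈ sumset D, x ∈ H := by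
    rintro x ⟨B, hB, rfl⟩
    exact AddSubgroup.multiset_sum_mem _ _ (fun a ha => hD a (Multiset.mem_of_le hB ha))
  have hEK : ∀ x ∈ sumset E, x ∈ K := by
    rintro x ⟨B, hB, rfl⟩
    exact AddSubgroup.multiset_sum_mem _ _ (fun a ha => hE a (Multiset.mem_of_le hB ha))
  have hbij : Set.BijOn (fun p : G × G => p.1 + p.2) (sumset D ×ˢ sumset E)
      (sumset (D + E)) := by
    refine ⟨?_, ?_, ?_⟩
    · rintro ⟨x, y⟩ ⟨⟨B₁, hB₁, rfl⟩, ⟨B₂, hB₂, rfl⟩⟩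
      exact ⟨B₁ + B₂, add_le_add hB₁ hB₂, by rw [Multiset.sum_add]⟩
    · rintro ⟨x, y⟩ ⟨hx, hy⟩ ⟨x', y'⟩ ⟨hx', hy'⟩ hsum
      simp only at hsum
      have hmem : x - x' ∈ H ⊓ K := by
        rw [AddSubgroup.mem_inf]
        refine ⟨sub_mem (hDH x hx) (hDH x' hx'), ?_⟩
        have : x - x' = y' - y := by
            have := hsum; abel_nf; linear_combination (norm := abel) hsum
        rw [this]
        exact sub_mem (hEK y' hy') (hEK y hy)
      rw [hinf, AddSubgroup.mem_bot, sub_eq_zero] at hmem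
      have hy2 : y = y' := by
        have := hsum; rw [hmem] at this
        exact add_left_cancel this
      simp [hmem, hy2]
    · rintro z ⟨B, hB, rfl⟩
      obtain ⟨B₁, B₂, h₁, h₂, rfl⟩ := split_le D E B hB
      exact ⟨(B₁.sum, B₂.sum), ⟨⟨B₁, h₁, rfl⟩, ⟨B₂, h₂, rfl⟩⟩, (Multiset.sum_add _ _).symm⟩
  have := Set.ncard_image_of_injOn hbij.injOn
  rw [hbij.image_eq] at this
  rw [this]
  have : ((sumset D) ×ˢ (sumset E)).ncard = (sumset D).ncard * (sumset E).ncard := by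
    rw [Set.ncard_eq_toFinset_card', Set.ncard_eq_toFinset_card', Set.ncard_eq_toFinset_card',
      Set.toFinset_prod, Finset.card_product]
  exact this
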